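/- There is a bijection between the set of rooted binary phylogenetic trees on a fixed ordered leaf set of size n and the set of integer vectors (a_1, ..., a_{n-1}) with -(i-1) ≤ a_i ≤ i-1 for each i, given by the Ordered Leaf Attachment encoding. -/

import Mathlib

open scoped Classical

namespace OLA

/-- Rooted binary phylogenetic trees with `ℕ`-labeled leaves. -/
inductive BTree where
  | leaf (x : ℕ)
  | node (l r : BTree)
deriving DecidableEq

namespace BTree

def leafList : BTree → List ℕ
  | .leaf x => [x]
  | .node l r => leafList l ++ leafList r

def leafSet (t : BTree) : Finset ℕ := t.leafList.toFinset

/-- `t` is a phylogenetic tree on the leaf set `{0, …, n-1}`. -/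
def IsPhylo (t : BTree) (n : ℕ) : Prop :=
  t.leafList.Nodup ∧ t.leafSet = Finset.range n

def minLeaf : BTree → ℕ
  | .leaf x => x
  | .node l r => min (minLeaf l) (minLeaf r)

/-- OLA index of the root of a (sub)tree: leaf label, or minus the second
smallest of the minimal leaves of the two children. -/
def idx : BTree → ℤ
  | .leaf x => (x : ℤ)
  | .node l r => -(max (minLeaf l) (minLeaf r) : ℤ)

/-- Restriction `T^i` of `t` to the leaves labeled `≤ i` (suppressing
degree-2 nodes); `none` if no such leaf exists. -/
def restrictLe : BTree → ℕ → Option BTree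
  | .leaf x, i => if x ≤ i then some (.leaf x) else none
  | .node l r, i =>
    match restrictLe l i, restrictLe r i with
    | some l', some r' => some (.node l' r')
    | some l', none => some l'
    | none, some r' => some r'
    | none, none => none

/-- Restriction `T|_S` of `t` to the leaves in `S` (suppressing degree-2 nodes). -/
def restrictTo : BTree → Finset ℕ → Option BTree
  | .leaf x, S => if x ∈ S then some (.leaf x) else none
  | .node l r, S =>
    match restrictTo l S, restrictTo r S with
    | some l', some r' => some (.node l' r')
    | some l', none => some l'
    | none, some r' => some r'
    | none, none => none

/-- OLA index of the sibling of the leaf labeled `i`, if it exists. -/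
def siblingIdx : BTree → ℕ → Option ℤ
  | .leaf _, _ => none
  | .node l r, i =>
    if l = .leaf i then some r.idx
    else if r = .leaf i then some l.idx
    else (siblingIdx l i).orElse (fun _ => siblingIdx r i)

/-- The OLA vector entry of `t` at position `i ≥ 1`: the index of the sibling
of leaf `i` in the restriction of `t` to leaves `0, …, i`. -/
def olaEntry (t : BTree) (i : ℕ) : ℤ :=
  ((t.restrictLe i).bind (fun t' => t'.siblingIdx i)).getD 0

def relabel (f : ℕ → ℕ) : BTree → BTree
  | .leaf x => .leaf (f x)
  | .node l r => .node (relabel f l) (relabel f r)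

/-- The set of clusters (leaf sets of rooted subtrees) of `t`.  Two leaf-labeled
trees over the same leaf set are isomorphic iff their cluster sets coincide. -/
def clusters : BTree → Set (Set ℕ)
  | .leaf x => {{x}}
  | .node l r => insert {y | y ∈ (node l r).leafList} (clusters l ∪ clusters r)

def subtreeAt : BTree → List Bool → Option BTree
  | t, [] => some t
  | .leaf _, _ :: _ => none
  | .node l _, false :: p => subtreeAt l p
  | .node _ r, true :: p => subtreeAt r p

/-- `w` occurs as a rooted subtree (i.e. the subtree below a node) of `t`. -/
def IsNode (t w : BTree) : Prop := ∃ p, t.subtreeAt p = some w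

/-- The position of the least common ancestor of the leaves in `S`. -/
def lcaPos : BTree → Finset ℕ → List Bool
  | .leaf _, _ => []
  | .node l r, S =>
    if S ⊆ l.leafSet then false :: lcaPos l S
    else if S ⊆ r.leafSet then true :: lcaPos r S
    else []

/-- Positions of the nodes of the minimal spanning subtree `T(S)`. -/
def spanNodes (t : BTree) (S : Finset ℕ) : Set (List Bool) :=
  {p | t.lcaPos S <+: p ∧ ∃ u, t.subtreeAt p = some u ∧ ∃ x ∈ S, x ∈ u.leafList}

end BTree

/-- OLA vector of tree `t` under the leaf ordering `σ` (leaf `x` is the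
`σ x`-th leaf in the order). -/
def ola (t : BTree) (σ : Equiv.Perm ℕ) (i : ℕ) : ℤ :=
  (t.relabel σ).olaEntry i

/-- `σ` is a valid leaf ordering of the leaf set `{0, …, n-1}`. -/
def IsOrdering (σ : Equiv.Perm ℕ) (n : ℕ) : Prop := ∀ x < n, σ x < n

/-- The set of (corrected) mismatched indices among `{1, …, i}` of a family of
OLA vectors: an index is mismatched if two of the vectors differ there, or if
all vectors place that leaf above the internal node created by an
already-mismatched leaf. -/
noncomputable def mismatch {ι : Type*} (v : ι → ℕ → ℤ) : ℕ → Finset ℕ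
  | 0 => ∅
  | i + 1 =>
    let M := mismatch v i
    if (∃ a b : ι, v a (i+1) ≠ v b (i+1)) ∨ (∃ j ∈ M, ∀ a : ι, v a (i+1) = -(j : ℤ))
    then insert (i+1) M else M

/-- Corrected OLA distance of a family of OLA vectors of trees on `n` leaves. -/
noncomputable def corrDist {ι : Type*} (v : ι → ℕ → ℤ) (n : ℕ) : ℕ :=
  (mismatch v (n-1)).card

/-- Hamming OLA distance: the number of indices where at least two vectors differ. -/
noncomputable def hamDist {ι : Type*} (v : ι → ℕ → ℤ) (n : ℕ) : ℕ :=
  ((Finset.Icc 1 (n-1)).filter fun i => ∃ a b : ι, v a i ≠ v b i).card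

/-- `comp` is an agreement forest for the trees `ts` over leaf set `{0,…,n-1}`:
components have pairwise disjoint leaf sets partitioning the full leaf set,
each tree restricted to a component's leaves is isomorphic to the component,
and the spanning subtrees are node-disjoint in each tree. -/
def IsAF {ι : Type*} (ts : ι → BTree) (n : ℕ) {f : ℕ} (comp : Fin f → BTree) : Prop :=
  (∀ i, (comp i).leafList.Nodup) ∧
  (∀ i j, i ≠ j → Disjoint (comp i).leafSet (comp j).leafSet) ∧
  (Finset.univ.biUnion (fun i => (comp i).leafSet) = Finset.range n) ∧
  (∀ a i, ∃ c, (ts a).restrictTo (comp i).leafSet = some c ∧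
      c.clusters = (comp i).clusters) ∧
  (∀ a i j, i ≠ j →
      Disjoint (BTree.spanNodes (ts a) ((comp i).leafSet))
               (BTree.spanNodes (ts a) ((comp j).leafSet)))

/-- Edge of the inheritance graph: some tree has a directed path from the root
of the spanning subtree of component `i` down to that of component `j`. -/
def inhEdge {ι : Type*} (ts : ι → BTree) {f : ℕ} (comp : Fin f → BTree)
    (i j : Fin f) : Prop :=
  i ≠ j ∧ ∃ a, (BTree.lcaPos (ts a) ((comp i).leafSet)) <+:
      (BTree.lcaPos (ts a) ((comp j).leafSet))

/-- `comp` is an acyclic agreement forest for `ts`. -/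
def IsAAF {ι : Type*} (ts : ι → BTree) (n : ℕ) {f : ℕ} (comp : Fin f → BTree) : Prop :=
  IsAF ts n comp ∧ ∀ i, ¬ Relation.TransGen (inhEdge ts comp) i i

/-- Size of a maximum acyclic agreement forest (an AAF with fewest components). -/
noncomputable def maafSize {ι : Type*} (ts : ι → BTree) (n : ℕ) : ℕ :=
  sInf {f | ∃ comp : Fin f → BTree, IsAAF ts n comp}


namespace BTree

/-! ### Basic lemmas -/

lemma leafList_ne_nil : ∀ t : BTree, t.leafList ≠ []
  | .leaf _ => by simp [leafList]
  | .node l r => by simp [leafList, leafList_ne_nil l]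

lemma minLeaf_mem : ∀ t : BTree, t.minLeaf ∈ t.leafList
  | .leaf x => by simp [leafList, minLeaf]
  | .node l r => by
      rcases min_cases l.minLeaf r.minLeaf with ⟨h, _⟩ | ⟨h, _⟩ <;>
        simp [leafList, minLeaf, h, minLeaf_mem l, minLeaf_mem r]

lemma minLeaf_le : ∀ t : BTree, ∀ x ∈ t.leafList, t.minLeaf ≤ x
  | .leaf y => by simp [leafList, minLeaf]
  | .node l r => by
      intro x hx
      simp only [leafList, List.mem_append] at hx
      rcases hx with hx | hx
      · exact le_trans (min_le_left _ _) (minLeaf_le l x hx)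
      · exact le_trans (min_le_right _ _) (minLeaf_le r x hx)

/-- Canonical form: at each node the left subtree holds the smaller minimum leaf. -/
def Canon : BTree → Prop
  | .leaf _ => True
  | .node l r => minLeaf l < minLeaf r ∧ Canon l ∧ Canon r

/-- List of OLA indices of all nodes of a tree. -/
def idxList : BTree → List ℤ
  | .leaf x => [(x : ℤ)]
  | .node l r => idx (.node l r) :: (idxList l ++ idxList r)

lemma idx_mem_idxList : ∀ t : BTree, t.idx ∈ t.idxList
  | .leaf x => by simp [idxList, idx]
  | .node l r => by simp [idxList]

lemma natAbs_mem_leafList : ∀ t : BTree, ∀ z ∈ t.idxList, z.natAbs ∈ t.leafList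
  | .leaf x, z, hz => by
      simp only [idxList, List.mem_singleton] at hz
      simp [hz, leafList]
  | .node l r, z, hz => by
      simp only [idxList, List.mem_cons, List.mem_append] at hz
      simp only [leafList, List.mem_append]
      rcases hz with hz | hz | hz
      · subst hz
        simp only [idx, Int.natAbs_neg, ← Nat.cast_max, Int.natAbs_natCast]
        rcases max_cases l.minLeaf r.minLeaf with ⟨h, _⟩ | ⟨h, _⟩ <;> rw [h]
        · exact Or.inl (minLeaf_mem l)
        · exact Or.inr (minLeaf_mem r)
      · exact Or.inl (natAbs_mem_leafList l z hz)
      · exact Or.inr (natAbs_mem_leafList r z hz)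

lemma neg_of_mem_idxList : ∀ t : BTree, Canon t → ∀ z ∈ t.idxList, z < 0 → z < -(t.minLeaf : ℤ)
  | .leaf x, _, z, hz, hneg => by
      simp only [idxList, List.mem_singleton] at hz; omega
  | .node l r, hc, z, hz, hneg => by
      obtain ⟨hlt, hcl, hcr⟩ := hc
      simp only [idxList, List.mem_cons, List.mem_append] at hz
      have hmin : minLeaf (.node l r) = min l.minLeaf r.minLeaf := rfl
      have h1 : min l.minLeaf r.minLeaf = l.minLeaf := min_eq_left hlt.le
      have h2 : max l.minLeaf r.minLeaf = r.minLeaf := max_eq_right hlt.le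
      rcases hz with hz | hz | hz
      · subst hz
        simp only [idx, ← Nat.cast_max]
        rw [hmin, h1, h2]
        omega
      · have := neg_of_mem_idxList l hcl z hz hneg
        rw [hmin, h1]; exact this
      · have := neg_of_mem_idxList r hcr z hz hneg
        rw [hmin, h1]; omega

lemma idxList_nodup : ∀ t : BTree, Canon t → t.leafList.Nodup → t.idxList.Nodup
  | .leaf x, _, _ => by simp [idxList]
  | .node l r, hc, hnd => by
      obtain ⟨hlt, hcl, hcr⟩ := hc
      simp only [leafList, List.nodup_append'] at hnd
      obtain ⟨hndl, hndr, hdisj⟩ := hnd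
      simp only [idxList, List.nodup_cons, List.nodup_append']
      refine ⟨?_, idxList_nodup l hcl hndl, idxList_nodup r hcr hndr, ?_⟩
      · simp only [List.mem_append]
        rintro (h | h)
        · have := natAbs_mem_leafList l _ h
          have hmax : max l.minLeaf r.minLeaf = r.minLeaf := max_eq_right hlt.le
          simp only [idx, Int.natAbs_neg, ← Nat.cast_max, Int.natAbs_natCast, hmax] at this
          exact hdisj this (minLeaf_mem r)
        · have hmax : max l.minLeaf r.minLeaf = r.minLeaf := max_eq_right hlt.le
          have hneg : idx (.node l r) < 0 := by
            simp only [idx, ← Nat.cast_max, hmax]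
            omega
          have := neg_of_mem_idxList r hcr _ h hneg
          simp only [idx, ← Nat.cast_max, hmax] at this
          omega
      · intro z hzl hzr
        exact hdisj (natAbs_mem_leafList l z hzl) (natAbs_mem_leafList r z hzr)


/-! ### insertAt, decode, normalize -/

/-- Attach leaf `i` above the node with OLA index `a`. -/
def insertAt (a : ℤ) (i : ℕ) : BTree → BTree
  | .leaf x => if (x : ℤ) = a then .node (.leaf x) (.leaf i) else .leaf x
  | .node l r => if idx (.node l r) = a then .node (.node l r) (.leaf i)
      else .node (insertAt a i l) (insertAt a i r)

/-- Decode an OLA vector into a tree on leaves `0, …, k`. -/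
def decode (a : ℕ → ℤ) : ℕ → BTree
  | 0 => .leaf 0
  | k+1 => insertAt (a (k+1)) (k+1) (decode a k)

/-- Sort children at every node by minimal leaf. -/
def normalize : BTree → BTree
  | .leaf x => .leaf x
  | .node l r => if minLeaf l ≤ minLeaf r then .node (normalize l) (normalize r)
      else .node (normalize r) (normalize l)

/-! ### restrictLe lemmas -/

lemma restrictLe_eq_none_iff : ∀ (t : BTree) (j : ℕ),
    restrictLe t j = none ↔ ∀ x ∈ t.leafList, j < x
  | .leaf x, j => by
      simp only [restrictLe, leafList, List.mem_singleton]
      split <;> rename_i h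
      · exact iff_of_false (by simp) (fun hall => by have := hall x rfl; omega)
      · exact iff_of_true rfl (by rintro y rfl; omega)
  | .node l r, j => by
      have Hl := restrictLe_eq_none_iff l j
      have Hr := restrictLe_eq_none_iff r j
      rcases hl : restrictLe l j with _ | l' <;> rcases hr : restrictLe r j with _ | r' <;>
        rw [hl] at Hl <;> rw [hr] at Hr <;>
        simp only [restrictLe, hl, hr, leafList, List.mem_append]
      · exact iff_of_true (by simp only [restrictLe, hl, hr]) (by
          rintro x (hx | hx)
          exacts [(Hl.mp rfl) x hx, (Hr.mp rfl) x hx])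
      · exact iff_of_false (by simp [restrictLe, hl, hr])
          (fun hall => nomatch (Hr.mpr fun x hx => hall x (Or.inr hx)))
      · exact iff_of_false (by simp [restrictLe, hl, hr])
          (fun hall => nomatch (Hl.mpr fun x hx => hall x (Or.inl hx)))
      · exact iff_of_false (by simp [restrictLe, hl, hr])
          (fun hall => nomatch (Hl.mpr fun x hx => hall x (Or.inl hx)))

lemma restrictLe_all : ∀ (t : BTree) (j : ℕ), (∀ x ∈ t.leafList, x ≤ j) →
    restrictLe t j = some t
  | .leaf x, j, h => by
      simp only [restrictLe, if_pos (h x (by simp [leafList]))]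
  | .node l r, j, h => by
      have hl := restrictLe_all l j fun x hx => h x (by simp [leafList, hx])
      have hr := restrictLe_all r j fun x hx => h x (by simp [leafList, hx])
      simp only [restrictLe, hl, hr]

lemma restrictLe_leafList : ∀ (t : BTree) (j : ℕ) (t' : BTree),
    restrictLe t j = some t' → t'.leafList = t.leafList.filter (fun x => x ≤ j)
  | .leaf x, j, t', h => by
      simp only [restrictLe] at h
      split at h <;> rename_i hx
      · cases h; simp [leafList, hx]
      · exact nomatch h
  | .node l r, j, t', h => by
      rcases hl : restrictLe l j with _ | l' <;> rcases hr : restrictLe r j with _ | r' <;>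
        simp only [restrictLe, hl, hr] at h <;> cases h
      · -- none, some
        rw [restrictLe_eq_none_iff] at hl
        have : l.leafList.filter (fun x => x ≤ j) = [] := by
          rw [List.filter_eq_nil_iff]
          intro x hx
          simpa using LT.lt.not_ge (hl x hx)
        simp [leafList, List.filter_append, this, restrictLe_leafList r j _ hr]
      · -- some, none
        rw [restrictLe_eq_none_iff] at hr
        have : r.leafList.filter (fun x => x ≤ j) = [] := by
          rw [List.filter_eq_nil_iff]
          intro x hx
          simpa using LT.lt.not_ge (hr x hx)
        simp [leafList, List.filter_append, this, restrictLe_leafList l j _ hl]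
      · -- some, some
        simp [leafList, List.filter_append, restrictLe_leafList l j _ hl,
          restrictLe_leafList r j _ hr]

lemma minLeaf_le_of_restrictLe_some : ∀ (t : BTree) (j : ℕ) (t' : BTree),
    restrictLe t j = some t' → t.minLeaf ≤ j := by
  intro t j t' h
  by_contra hc
  push_neg at hc
  have : restrictLe t j = none := by
    rw [restrictLe_eq_none_iff]
    intro x hx
    exact lt_of_lt_of_le hc (minLeaf_le t x hx)
  rw [this] at h
  exact nomatch h

lemma minLeaf_restrictLe : ∀ (t : BTree) (j : ℕ) (t' : BTree),
    restrictLe t j = some t' → t'.minLeaf = t.minLeaf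
  | .leaf x, j, t', h => by
      simp only [restrictLe] at h
      split at h
      · cases h; rfl
      · exact nomatch h
  | .node l r, j, t', h => by
      rcases hl : restrictLe l j with _ | l' <;> rcases hr : restrictLe r j with _ | r' <;>
        simp only [restrictLe, hl, hr] at h <;> cases h
      · -- none, some
        rw [restrictLe_eq_none_iff] at hl
        have h1 := minLeaf_restrictLe r j _ hr
        have h2 : j < l.minLeaf := hl _ (minLeaf_mem l)
        have h3 : r.minLeaf ≤ j := minLeaf_le_of_restrictLe_some r j _ hr
        simp only [minLeaf]
        omega
      · rw [restrictLe_eq_none_iff] at hr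
        have h1 := minLeaf_restrictLe l j _ hl
        have h2 : j < r.minLeaf := hr _ (minLeaf_mem r)
        have h3 : l.minLeaf ≤ j := minLeaf_le_of_restrictLe_some l j _ hl
        simp only [minLeaf]
        omega
      · have h1 := minLeaf_restrictLe l j _ hl
        have h2 := minLeaf_restrictLe r j _ hr
        simp only [minLeaf]
        rw [h1, h2]

lemma restrictLe_restrictLe : ∀ (t : BTree) (i j : ℕ), i ≤ j →
    (restrictLe t j).bind (fun u => restrictLe u i) = restrictLe t i
  | .leaf x, i, j, hij => by
      simp only [restrictLe]
      by_cases h1 : x ≤ j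
      · simp [h1, restrictLe]
      · have h2 : ¬ x ≤ i := by omega
        simp [h1, h2]
  | .node l r, i, j, hij => by
      have Hl := restrictLe_restrictLe l i j hij
      have Hr := restrictLe_restrictLe r i j hij
      rcases hl : restrictLe l j with _ | l' <;> rcases hr : restrictLe r j with _ | r' <;>
        rw [hl] at Hl <;> rw [hr] at Hr <;>
        simp only [Option.bind_none, Option.bind_some] at Hl Hr
      · simp only [restrictLe, hl, hr, ← Hl, ← Hr, Option.bind_none]
      · rcases h3 : restrictLe r' i with _ | r'' <;>
          simp only [restrictLe, hl, hr, ← Hl, ← Hr, h3, Option.bind_none, Option.bind_some]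
      · rcases h2 : restrictLe l' i with _ | l'' <;>
          simp only [restrictLe, hl, hr, ← Hl, ← Hr, h2, Option.bind_none, Option.bind_some]
      · rcases h2 : restrictLe l' i with _ | l'' <;> rcases h3 : restrictLe r' i with _ | r'' <;>
          simp only [restrictLe, hl, hr, ← Hl, ← Hr, h2, h3, Option.bind_none, Option.bind_some]

lemma canon_restrictLe : ∀ (t : BTree) (j : ℕ) (t' : BTree), Canon t →
    restrictLe t j = some t' → Canon t'
  | .leaf x, j, t', _, h => by
      simp only [restrictLe] at h
      split at h
      · cases h; trivial
      · exact nomatch h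
  | .node l r, j, t', hc, h => by
      obtain ⟨hlt, hcl, hcr⟩ := hc
      rcases hl : restrictLe l j with _ | l' <;> rcases hr : restrictLe r j with _ | r' <;>
        simp only [restrictLe, hl, hr] at h <;> cases h
      · exact canon_restrictLe r j _ hcr hr
      · exact canon_restrictLe l j _ hcl hl
      · refine ⟨?_, canon_restrictLe l j _ hcl hl, canon_restrictLe r j _ hcr hr⟩
        rw [minLeaf_restrictLe l j _ hl, minLeaf_restrictLe r j _ hr]
        exact hlt

/-! ### insertAt lemmas -/

lemma insertAt_of_not_mem : ∀ (t : BTree) (a : ℤ) (i : ℕ), a ∉ t.idxList → insertAt a i t = t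
  | .leaf x, a, i, h => by
      have hx : ¬ ((x : ℤ) = a) := fun he => h (by simp [idxList, he])
      simp [insertAt, hx]
  | .node l r, a, i, h => by
      simp only [idxList, List.mem_cons, List.mem_append] at h
      push_neg at h
      obtain ⟨h1, h2, h3⟩ := h
      have h1' : ¬ (idx (.node l r) = a) := fun he => h1 he.symm
      simp [insertAt, h1', insertAt_of_not_mem l a i h2, insertAt_of_not_mem r a i h3]

lemma minLeaf_insertAt : ∀ (t : BTree) (a : ℤ) (i : ℕ), (∀ x ∈ t.leafList, x < i) →
    minLeaf (insertAt a i t) = minLeaf t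
  | .leaf x, a, i, h => by
      have hx : x < i := h x (by simp [leafList])
      by_cases hg : (x : ℤ) = a <;> simp [insertAt, hg, minLeaf] <;> omega
  | .node l r, a, i, h => by
      have hl := minLeaf_insertAt l a i (fun x hx => h x (by simp [leafList, hx]))
      have hr := minLeaf_insertAt r a i (fun x hx => h x (by simp [leafList, hx]))
      have hm : minLeaf (.node l r) < i := h _ (minLeaf_mem (.node l r))
      by_cases hg : idx (.node l r) = a
      · simp only [insertAt, if_pos hg, minLeaf]
        exact min_eq_left (le_of_lt hm)
      · simp only [insertAt, if_neg hg, minLeaf, hl, hr]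

lemma canon_insertAt : ∀ (t : BTree) (a : ℤ) (i : ℕ), (∀ x ∈ t.leafList, x < i) →
    Canon t → Canon (insertAt a i t)
  | .leaf x, a, i, h, _ => by
      have hx : x < i := h x (by simp [leafList])
      by_cases hg : (x : ℤ) = a
      · simp only [insertAt, if_pos hg]
        exact ⟨hx, trivial, trivial⟩
      · simp only [insertAt, if_neg hg]
        trivial
  | .node l r, a, i, h, hc => by
      obtain ⟨hlt, hcl, hcr⟩ := hc
      have hm : minLeaf (.node l r) < i := h _ (minLeaf_mem (.node l r))
      by_cases hg : idx (.node l r) = a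
      · simp only [insertAt, if_pos hg]
        exact ⟨hm, ⟨hlt, hcl, hcr⟩, trivial⟩
      · simp only [insertAt, if_neg hg]
        refine ⟨?_, canon_insertAt l a i (fun x hx => h x (by simp [leafList, hx])) hcl,
          canon_insertAt r a i (fun x hx => h x (by simp [leafList, hx])) hcr⟩
        rw [minLeaf_insertAt l a i (fun x hx => h x (by simp [leafList, hx])),
          minLeaf_insertAt r a i (fun x hx => h x (by simp [leafList, hx]))]
        exact hlt

lemma leafList_insertAt : ∀ (t : BTree) (a : ℤ) (i : ℕ), a ∈ t.idxList → t.idxList.Nodup →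
    (insertAt a i t).leafList.Perm (i :: t.leafList)
  | .leaf x, a, i, hmem, _ => by
      have hx : (x : ℤ) = a := by simp [idxList] at hmem; omega
      simp only [insertAt, if_pos hx]
      exact List.Perm.swap i x []
  | .node l r, a, i, hmem, hnd => by
      simp only [idxList, List.nodup_cons, List.nodup_append'] at hnd
      obtain ⟨hhead, hndl, hndr, hdisj⟩ := hnd
      by_cases hg : idx (.node l r) = a
      · simp only [insertAt, if_pos hg]
        show (leafList (.node l r) ++ [i]).Perm _
        exact List.perm_append_comm
      · simp only [idxList, List.mem_cons, List.mem_append] at hmem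
        rcases hmem with hmem | hmem | hmem
        · exact absurd hmem.symm hg
        · have hnr : a ∉ r.idxList := fun hh => hdisj hmem hh
          have IH := leafList_insertAt l a i hmem hndl
          simp only [insertAt, if_neg hg, insertAt_of_not_mem r a i hnr]
          show ((insertAt a i l).leafList ++ r.leafList).Perm (i :: (l.leafList ++ r.leafList))
          exact IH.append_right r.leafList
        · have hnl : a ∉ l.idxList := fun hh => hdisj hh hmem
          have IH := leafList_insertAt r a i hmem hndr
          simp only [insertAt, if_neg hg, insertAt_of_not_mem l a i hnl]
          show (l.leafList ++ (insertAt a i r).leafList).Perm (i :: (l.leafList ++ r.leafList))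
          exact ((IH.append_left l.leafList).trans List.perm_middle)


lemma idxList_insertAt : ∀ (t : BTree) (a : ℤ) (i : ℕ), (∀ x ∈ t.leafList, x < i) →
    a ∈ t.idxList → t.idxList.Nodup →
    (insertAt a i t).idxList.Perm ((i : ℤ) :: -(i : ℤ) :: t.idxList)
  | .leaf x, a, i, h, hmem, _ => by
      have hx : (x : ℤ) = a := by simp [idxList] at hmem; omega
      have hxi : x < i := h x (by simp [leafList])
      have hidx : idx (.node (.leaf x) (.leaf i)) = -(i : ℤ) := by
        simp only [idx, minLeaf]
        rw [max_eq_right (by exact_mod_cast hxi.le)]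
      simp only [insertAt, if_pos hx, idxList, hidx, hx, ↓reduceIte]
      show ([-(i:ℤ)] ++ [a, (i:ℤ)]).Perm ([(i:ℤ), -(i:ℤ)] ++ [a])
      exact (List.Perm.append_left [-(i:ℤ)] (List.Perm.swap (i:ℤ) a [])).trans
        (List.Perm.swap _ _ _)
  | .node l r, a, i, h, hmem, hnd => by
      simp only [idxList, List.nodup_cons, List.nodup_append'] at hnd
      obtain ⟨hhead, hndl, hndr, hdisj⟩ := hnd
      have hm : minLeaf (.node l r) < i := h _ (minLeaf_mem (.node l r))
      by_cases hg : idx (.node l r) = a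
      · have hidx : idx (.node (.node l r) (.leaf i)) = -(i : ℤ) := by
          simp only [idx, minLeaf]
          rw [max_eq_right]
          exact_mod_cast hm.le
        simp only [insertAt, if_pos hg, idxList]
        rw [hidx]
        exact List.Perm.trans (List.Perm.cons _ List.perm_append_comm) (List.Perm.swap _ _ _)
      · have hll : ∀ x ∈ l.leafList, x < i := fun x hx => h x (by simp [leafList, hx])
        have hrr : ∀ x ∈ r.leafList, x < i := fun x hx => h x (by simp [leafList, hx])
        simp only [idxList, List.mem_cons, List.mem_append] at hmem
        rcases hmem with hmem | hmem | hmem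
        · exact absurd hmem.symm hg
        · have hnr : a ∉ r.idxList := fun hh => hdisj hmem hh
          have IH := idxList_insertAt l a i hll hmem hndl
          have hidx2 : idx (.node (insertAt a i l) r) = idx (.node l r) := by
            simp only [idx, minLeaf_insertAt l a i hll]
          simp only [insertAt, if_neg hg, insertAt_of_not_mem r a i hnr, idxList]
          rw [hidx2]
          refine (List.Perm.cons (idx (.node l r)) (IH.append_right r.idxList)).trans ?_
          exact (List.Perm.swap _ _ _).trans (List.Perm.cons _ (List.Perm.swap _ _ _))
        · have hnl : a ∉ l.idxList := fun hh => hdisj hh hmem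
          have IH := idxList_insertAt r a i hrr hmem hndr
          have hidx2 : idx (.node l (insertAt a i r)) = idx (.node l r) := by
            simp only [idx, minLeaf_insertAt r a i hrr]
          simp only [insertAt, if_neg hg, insertAt_of_not_mem l a i hnl, idxList]
          rw [hidx2]
          refine (List.Perm.cons (idx (.node l r)) (IH.append_left l.idxList)).trans ?_
          refine (List.Perm.cons (idx (.node l r)) (List.perm_middle (a := (i:ℤ))
            (l₁ := l.idxList) (l₂ := -(i:ℤ) :: r.idxList))).trans ?_
          refine (List.Perm.cons (idx (.node l r)) (List.Perm.cons (i:ℤ)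
            (List.perm_middle (a := -(i:ℤ)) (l₁ := l.idxList) (l₂ := r.idxList)))).trans ?_
          exact (List.Perm.swap _ _ _).trans (List.Perm.cons _ (List.Perm.swap _ _ _))

lemma insertAt_eq_leaf : ∀ (t : BTree) (a : ℤ) (i y : ℕ), insertAt a i t = .leaf y → t = .leaf y
  | .leaf x, a, i, y, h => by
      by_cases hg : (x : ℤ) = a <;> simp only [insertAt, if_pos, if_neg, hg] at h
      · exact absurd h (by simp)
      · exact h
  | .node l r, a, i, y, h => by
      by_cases hg : idx (.node l r) = a <;>
        simp only [insertAt, if_pos, if_neg, hg, if_true, if_false] at h <;>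
        exact absurd h (by simp)

lemma siblingIdx_eq_none : ∀ (t : BTree) (m : ℕ), m ∉ t.leafList → siblingIdx t m = none
  | .leaf x, m, h => rfl
  | .node l r, m, h => by
      simp only [leafList, List.mem_append] at h
      push_neg at h
      have h1 : l ≠ .leaf m := fun he => h.1 (by simp [he, leafList])
      have h2 : r ≠ .leaf m := fun he => h.2 (by simp [he, leafList])
      simp [siblingIdx, h1, h2, siblingIdx_eq_none l m h.1, siblingIdx_eq_none r m h.2]

lemma siblingIdx_insertAt : ∀ (t : BTree) (a : ℤ) (i : ℕ), i ∉ t.leafList →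
    t.idxList.Nodup → a ∈ t.idxList → siblingIdx (insertAt a i t) i = some a
  | .leaf x, a, i, hi, _, hmem => by
      have hx : (x : ℤ) = a := by simp [idxList] at hmem; omega
      have hxi : x ≠ i := by simp [leafList] at hi; omega
      simp only [insertAt, if_pos hx, siblingIdx]
      simp [hxi, idx, hx]
  | .node l r, a, i, hi, hnd, hmem => by
      simp only [idxList, List.nodup_cons, List.nodup_append'] at hnd
      obtain ⟨hhead, hndl, hndr, hdisj⟩ := hnd
      simp only [leafList, List.mem_append] at hi
      push_neg at hi
      by_cases hg : idx (.node l r) = a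
      · simp only [insertAt, if_pos hg, siblingIdx]
        simp [hg]
      · simp only [idxList, List.mem_cons, List.mem_append] at hmem
        rcases hmem with hmem | hmem | hmem
        · exact absurd hmem.symm hg
        · have hnr : a ∉ r.idxList := fun hh => hdisj hmem hh
          have IH := siblingIdx_insertAt l a i hi.1 hndl hmem
          have hl1 : insertAt a i l ≠ .leaf i := fun he => hi.1 (by
            rw [insertAt_eq_leaf l a i i he]; simp [leafList])
          have hr1 : r ≠ .leaf i := fun he => hi.2 (by simp [he, leafList])
          simp only [insertAt, if_neg hg, insertAt_of_not_mem r a i hnr, siblingIdx]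
          rw [if_neg hl1, if_neg hr1, IH]
          rfl
        · have hnl : a ∉ l.idxList := fun hh => hdisj hh hmem
          have IH := siblingIdx_insertAt r a i hi.2 hndr hmem
          have hl1 : l ≠ .leaf i := fun he => hi.1 (by simp [he, leafList])
          have hr1 : insertAt a i r ≠ .leaf i := fun he => hi.2 (by
            rw [insertAt_eq_leaf r a i i he]; simp [leafList])
          simp only [insertAt, if_neg hg, insertAt_of_not_mem l a i hnl, siblingIdx]
          rw [if_neg hl1, if_neg hr1, siblingIdx_eq_none l i hi.1, IH]
          rfl

lemma restrictLe_insertAt : ∀ (t : BTree) (a : ℤ) (i j : ℕ), j < i →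
    restrictLe (insertAt a i t) j = restrictLe t j
  | .leaf x, a, i, j, hij => by
      by_cases hg : (x : ℤ) = a
      · simp only [insertAt, if_pos hg]
        by_cases hx : x ≤ j <;>
          simp [restrictLe, hx, show ¬ i ≤ j from by omega]
      · simp only [insertAt, if_neg hg]
  | .node l r, a, i, j, hij => by
      by_cases hg : idx (.node l r) = a
      · simp only [insertAt, if_pos hg]
        have hnone : restrictLe (.leaf i) j = none := by
          simp [restrictLe]; omega
        conv_lhs => rw [restrictLe]
        rw [hnone]
        rcases hlr : restrictLe (.node l r) j with _ | u <;> rfl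
      · have IHl := restrictLe_insertAt l a i j hij
        have IHr := restrictLe_insertAt r a i j hij
        simp only [insertAt, if_neg hg, restrictLe, IHl, IHr]

/-! ### decode lemmas -/

def idxTarget : ℕ → List ℤ
  | 0 => [0]
  | k+1 => ((k+1 : ℕ) : ℤ) :: -((k+1 : ℕ) : ℤ) :: idxTarget k

lemma mem_idxTarget : ∀ (k : ℕ) (z : ℤ), z ∈ idxTarget k ↔ -(k : ℤ) ≤ z ∧ z ≤ k
  | 0, z => by simp [idxTarget]; omega
  | k+1, z => by
      simp only [idxTarget, List.mem_cons, mem_idxTarget k]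
      push_cast
      omega

lemma idxTarget_nodup : ∀ k : ℕ, (idxTarget k).Nodup
  | 0 => by simp [idxTarget]
  | k+1 => by
      simp only [idxTarget, List.nodup_cons, List.mem_cons, mem_idxTarget k]
      refine ⟨?_, ?_, idxTarget_nodup k⟩ <;> push_cast <;> omega

lemma decode_spec (a : ℕ → ℤ) : ∀ k : ℕ,
    (∀ j, 1 ≤ j → j ≤ k → -(j : ℤ) < a j ∧ a j < j) →
    (decode a k).leafList.Perm (List.range (k+1)) ∧ Canon (decode a k) ∧
      (decode a k).idxList.Perm (idxTarget k)
  | 0, _ => by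
      refine ⟨?_, trivial, ?_⟩ <;> simp [decode, leafList, idxList, idxTarget, List.range_succ]
  | k+1, hb => by
      obtain ⟨hperm, hcanon, hidx⟩ := decode_spec a k
        (fun j h1 h2 => hb j h1 (by omega))
      have hleaves : ∀ x ∈ (decode a k).leafList, x < k+1 := by
        intro x hx
        have := hperm.mem_iff.mp hx
        simp only [List.mem_range] at this
        omega
      have hmem : a (k+1) ∈ (decode a k).idxList := by
        rw [hidx.mem_iff, mem_idxTarget]
        have := hb (k+1) (by omega) le_rfl
        push_cast at this ⊢
        omega
      have hnd : (decode a k).idxList.Nodup := hidx.nodup_iff.mpr (idxTarget_nodup k)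
      refine ⟨?_, ?_, ?_⟩
      · show (insertAt (a (k+1)) (k+1) (decode a k)).leafList.Perm _
        refine (leafList_insertAt _ _ _ hmem hnd).trans ?_
        refine (List.Perm.cons _ hperm).trans ?_
        conv_rhs => rw [List.range_succ]
        exact List.perm_append_comm (l₁ := [k+1]) (l₂ := List.range (k+1))
      · exact canon_insertAt _ _ _ hleaves hcanon
      · show (insertAt (a (k+1)) (k+1) (decode a k)).idxList.Perm _
        refine (idxList_insertAt _ _ _ hleaves hmem hnd).trans ?_
        exact List.Perm.cons _ (List.Perm.cons _ hidx)

lemma restrictLe_decode (a : ℕ → ℤ) : ∀ (k j : ℕ), j ≤ k →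
    restrictLe (decode a k) j = restrictLe (decode a j) j := by
  intro k
  induction k with
  | zero => intro j hj; interval_cases j; rfl
  | succ k IH =>
      intro j hj
      rcases Nat.eq_or_lt_of_le hj with h | h
      · rw [h]
      · have hjk : j ≤ k := by omega
        show restrictLe (insertAt (a (k+1)) (k+1) (decode a k)) j = _
        rw [restrictLe_insertAt _ _ _ _ (by omega), IH j hjk]

lemma isPhylo_decode (a : ℕ → ℤ) (k : ℕ)
    (hb : ∀ j, 1 ≤ j → j ≤ k → -(j : ℤ) < a j ∧ a j < j) :
    (decode a k).IsPhylo (k+1) := by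
  obtain ⟨hperm, -, -⟩ := decode_spec a k hb
  constructor
  · exact hperm.nodup_iff.mpr List.nodup_range
  · rw [leafSet, List.toFinset_eq_of_perm _ _ hperm]
    ext x
    simp

lemma olaEntry_decode (a : ℕ → ℤ) (k j : ℕ)
    (hb : ∀ j', 1 ≤ j' → j' ≤ k → -(j' : ℤ) < a j' ∧ a j' < j') (h1 : 1 ≤ j)
    (hjk : j ≤ k) : olaEntry (decode a k) j = a j := by
  obtain ⟨m, rfl⟩ : ∃ m, j = m + 1 := ⟨j - 1, by omega⟩
  obtain ⟨hpj, hcj, hij⟩ := decode_spec a (m+1) (fun j' u v => hb j' u (by omega))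
  have hsome : restrictLe (decode a k) (m+1) = some (decode a (m+1)) := by
    rw [restrictLe_decode a k (m+1) hjk]
    apply restrictLe_all
    intro x hx
    have := hpj.mem_iff.mp hx
    simp only [List.mem_range] at this
    omega
  obtain ⟨hpm, hcm, him⟩ := decode_spec a m (fun j' u v => hb j' u (by omega))
  have hnd : (decode a m).idxList.Nodup := him.nodup_iff.mpr (idxTarget_nodup m)
  have hmem : a (m+1) ∈ (decode a m).idxList := by
    rw [him.mem_iff, mem_idxTarget]
    have := hb (m+1) (by omega) (by omega)
    push_cast at this ⊢
    omega
  have hnotin : (m+1) ∉ (decode a m).leafList := by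
    intro hx
    have := hpm.mem_iff.mp hx
    simp only [List.mem_range] at this
    omega
  have hsib := siblingIdx_insertAt (decode a m) (a (m+1)) (m+1) hnotin hnd hmem
  rw [olaEntry, hsome]
  show ((decode a (m+1)).siblingIdx (m+1)).getD 0 = a (m+1)
  rw [show decode a (m+1) = insertAt (a (m+1)) (m+1) (decode a m) from rfl, hsib]
  rfl

/-! ### Deleting and re-inserting the largest leaf -/

lemma siblingIdx_mem : ∀ (t : BTree) (m : ℕ) (si : ℤ), siblingIdx t m = some si →
    si ∈ t.idxList
  | .leaf _, m, si, h => by simp [siblingIdx] at h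
  | .node l r, m, si, h => by
      rw [siblingIdx] at h
      split at h
      · cases h
        simp only [idxList, List.mem_cons, List.mem_append]
        exact Or.inr (Or.inr (idx_mem_idxList r))
      · split at h
        · cases h
          simp only [idxList, List.mem_cons, List.mem_append]
          exact Or.inr (Or.inl (idx_mem_idxList l))
        · cases hl : siblingIdx l m with
          | none =>
              rw [hl] at h
              have h2 : siblingIdx r m = some si := h
              have := siblingIdx_mem r m si h2
              simp only [idxList, List.mem_cons, List.mem_append]
              exact Or.inr (Or.inr this)
          | some sl =>
              rw [hl] at h
              have h2 : some sl = some si := h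
              cases h2
              have := siblingIdx_mem l m si hl
              simp only [idxList, List.mem_cons, List.mem_append]
              exact Or.inr (Or.inl this)

lemma mem_leafList_iff {t : BTree} {n : ℕ} (ht : t.IsPhylo n) {x : ℕ} :
    x ∈ t.leafList ↔ x < n := by
  rw [← List.mem_toFinset]
  show x ∈ t.leafSet ↔ _
  rw [ht.2, Finset.mem_range]

lemma insertAt_idx_self (t : BTree) (i : ℕ) : insertAt t.idx i t = .node t (.leaf i) := by
  cases t with
  | leaf x => simp [insertAt, idx]
  | node l r => simp [insertAt]

lemma sibling_insert : ∀ (t : BTree) (n : ℕ), 1 ≤ n → Canon t → t.leafList.Nodup →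
    (∀ x ∈ t.leafList, x ≤ n) → n ∈ t.leafList → ∀ t', restrictLe t (n-1) = some t' →
    ∃ si, siblingIdx t n = some si ∧ insertAt si n t' = t
  | .leaf x, n, hn, _, _, _, hmem, t', hres => by
      simp only [leafList, List.mem_singleton] at hmem
      subst hmem
      simp only [restrictLe, if_neg (by omega : ¬ n ≤ n - 1)] at hres
      exact nomatch hres
  | .node l r, n, hn, hc, hnd, hle, hmem, t', hres => by
      obtain ⟨hlt, hcl, hcr⟩ := hc
      have hnd' := hnd
      simp only [leafList, List.nodup_append'] at hnd'
      obtain ⟨hndl, hndr, hdisj⟩ := hnd'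
      have hndall : (BTree.node l r).idxList.Nodup :=
        idxList_nodup _ ⟨hlt, hcl, hcr⟩ hnd
      simp only [idxList, List.nodup_cons, List.nodup_append'] at hndall
      obtain ⟨hhead, hndIl, hndIr, hdisjI⟩ := hndall
      have hlel : ∀ x ∈ l.leafList, x ≤ n := fun x hx => hle x (by simp [leafList, hx])
      have hler : ∀ x ∈ r.leafList, x ≤ n := fun x hx => hle x (by simp [leafList, hx])
      simp only [leafList, List.mem_append] at hmem
      rcases hmem with hmem | hmem
      · -- n is in the left subtree
        have hnr : n ∉ r.leafList := fun hx => hdisj hmem hx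
        have hminr : r.minLeaf ≤ n := hler _ (minLeaf_mem r)
        have hminl : l.minLeaf ≤ n - 1 := by omega
        have hrl : restrictLe r (n-1) = some r := restrictLe_all r (n-1) (by
          intro x hx
          have h1 := hler x hx
          have h2 : x ≠ n := fun he => hnr (he ▸ hx)
          omega)
        have hlnotnone : restrictLe l (n-1) ≠ none := by
          rw [Ne, restrictLe_eq_none_iff]
          push_neg
          exact ⟨l.minLeaf, minLeaf_mem l, by omega⟩
        rcases hll : restrictLe l (n-1) with _ | l'
        · exact absurd hll hlnotnone
        have ht' : t' = .node l' r := by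
          simp only [restrictLe, hll, hrl] at hres
          exact (Option.some_inj.mp hres).symm
        subst ht'
        obtain ⟨si, hsib, hins⟩ := sibling_insert l n hn hcl hndl hlel hmem l' hll
        have hlnotleaf : l ≠ .leaf n := by
          intro he
          subst he
          simp only [minLeaf] at hlt
          omega
        have hrnotleaf : r ≠ .leaf n := by
          intro he
          exact hnr (by simp [he, leafList])
        refine ⟨si, ?_, ?_⟩
        · rw [siblingIdx, if_neg hlnotleaf, if_neg hrnotleaf, hsib]
          rfl
        · have hsimem := siblingIdx_mem l n si hsib
          have hsine : idx (.node l' r) = si → False := by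
            intro he
            have : idx (.node l' r) = idx (.node l r) := by
              simp only [idx, minLeaf_restrictLe l (n-1) l' hll]
            rw [this] at he
            exact hhead (he ▸ (List.mem_append.mpr (Or.inl hsimem)))
          rw [insertAt, if_neg hsine, hins,
            insertAt_of_not_mem r si n (fun hx => hdisjI hsimem hx)]
      · -- n is in the right subtree
        have hnl : n ∉ l.leafList := fun hx => hdisj hx hmem
        have hrestl : restrictLe l (n-1) = some l := restrictLe_all l (n-1) (by
          intro x hx
          have h1 := hlel x hx
          have h2 : x ≠ n := fun he => hnl (he ▸ hx)
          omega)
        have hlnotleaf : l ≠ .leaf n := fun he => hnl (by simp [he, leafList])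
        by_cases hrleaf : r = .leaf n
        · subst hrleaf
          have ht' : t' = l := by
            simp only [restrictLe, hrestl, if_neg (show ¬ n ≤ n - 1 by omega)] at hres
            exact (Option.some_inj.mp hres).symm
          rw [ht']
          refine ⟨idx l, ?_, ?_⟩
          · rw [siblingIdx, if_neg hlnotleaf, if_pos rfl]
          · exact insertAt_idx_self l n
        · -- r is an internal node containing n
          have hrnode : ∃ r1 r2, r = .node r1 r2 := by
            cases r with
            | leaf y =>
                simp only [leafList, List.mem_singleton] at hmem
                exact absurd (by rw [hmem]) hrleaf
            | node r1 r2 => exact ⟨r1, r2, rfl⟩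
          obtain ⟨r1, r2, rfl⟩ := hrnode
          have hlt2 : r1.minLeaf < r2.minLeaf := hcr.1
          have hmin2 : r2.minLeaf ≤ n := hler _ (by
            simp only [leafList, List.mem_append]
            exact Or.inr (minLeaf_mem r2))
          have hminr : (BTree.node r1 r2).minLeaf ≤ n - 1 := by
            have h3 : r1.minLeaf < n := by omega
            show min r1.minLeaf r2.minLeaf ≤ n - 1
            omega
          have hrnotnone : restrictLe (.node r1 r2) (n-1) ≠ none := by
            rw [Ne, restrictLe_eq_none_iff]
            push_neg
            exact ⟨(BTree.node r1 r2).minLeaf, minLeaf_mem _, by omega⟩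
          rcases hrr : restrictLe (.node r1 r2) (n-1) with _ | r'
          · exact absurd hrr hrnotnone
          have ht' : t' = .node l r' := by
            rw [restrictLe, hrestl, hrr] at hres
            exact (Option.some_inj.mp hres).symm
          subst ht'
          obtain ⟨si, hsib, hins⟩ := sibling_insert (.node r1 r2) n hn hcr hndr hler hmem r' hrr
          refine ⟨si, ?_, ?_⟩
          · rw [siblingIdx, if_neg hlnotleaf, if_neg hrleaf,
              siblingIdx_eq_none l n hnl, hsib]
            rfl
          · have hsimem := siblingIdx_mem _ n si hsib
            have hsine : idx (.node l r') = si → False := by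
              intro he
              have : idx (.node l r') = idx (.node l (.node r1 r2)) := by
                simp only [idx, minLeaf_restrictLe (BTree.node r1 r2) (n-1) r' hrr]
              rw [this] at he
              exact hhead (he ▸ (List.mem_append.mpr (Or.inr hsimem)))
            rw [insertAt, if_neg hsine, hins,
              insertAt_of_not_mem l si n (fun hx => hdisjI hx hsimem)]

/-! ### decode ∘ encode = id on canonical phylogenetic trees -/

lemma isPhylo_one {t : BTree} (ht : t.IsPhylo 1) : t = .leaf 0 := by
  cases t with
  | leaf x =>
      have := (mem_leafList_iff ht (x := x)).mp (by simp [leafList])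
      rw [Nat.lt_one_iff.mp this]
  | node l r =>
      exfalso
      have h0l : l.minLeaf < 1 := (mem_leafList_iff ht).mp
        (by simp only [leafList, List.mem_append]; exact Or.inl (minLeaf_mem l))
      have h0r : r.minLeaf < 1 := (mem_leafList_iff ht).mp
        (by simp only [leafList, List.mem_append]; exact Or.inr (minLeaf_mem r))
      have hnd := ht.1
      simp only [leafList, List.nodup_append'] at hnd
      exact hnd.2.2 (show l.minLeaf ∈ l.leafList from minLeaf_mem l)
        (by rw [show l.minLeaf = r.minLeaf by omega]; exact minLeaf_mem r)

lemma olaEntry_restrict {t t' : BTree} {k : ℕ} (hres : restrictLe t k = some t')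
    {j : ℕ} (hjk : j ≤ k) : olaEntry t' j = olaEntry t j := by
  have h := restrictLe_restrictLe t j k hjk
  rw [hres] at h
  simp only [Option.bind_some] at h
  rw [olaEntry, olaEntry, h]

lemma decode_congr : ∀ (a b : ℕ → ℤ) (k : ℕ), (∀ j, 1 ≤ j → j ≤ k → a j = b j) →
    decode a k = decode b k
  | _, _, 0, _ => rfl
  | a, b, k+1, h => by
      show insertAt (a (k+1)) (k+1) (decode a k) = insertAt (b (k+1)) (k+1) (decode b k)
      rw [h (k+1) (by omega) le_rfl, decode_congr a b k (fun j u v => h j u (by omega))]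

lemma isPhylo_restrict {t : BTree} {n j : ℕ} (ht : t.IsPhylo n) (hj : j + 1 ≤ n) {t' : BTree}
    (hres : restrictLe t j = some t') : t'.IsPhylo (j+1) := by
  have hl := restrictLe_leafList t j t' hres
  constructor
  · rw [hl]; exact ht.1.filter _
  · rw [leafSet, hl]
    ext x
    simp only [List.mem_toFinset, List.mem_filter, Finset.mem_range, decide_eq_true_eq]
    constructor
    · rintro ⟨hx, h⟩
      have := (mem_leafList_iff ht).mp hx
      omega
    · intro h
      exact ⟨(mem_leafList_iff ht).mpr (by omega), by omega⟩

lemma restrictLe_ne_none {t : BTree} {n : ℕ} (ht : t.IsPhylo n) (hn : 1 ≤ n) (j : ℕ) :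
    restrictLe t j ≠ none := by
  rw [Ne, restrictLe_eq_none_iff]
  push_neg
  exact ⟨0, (mem_leafList_iff ht).mpr (by omega), by omega⟩

theorem decode_encode : ∀ (k : ℕ) (t : BTree), Canon t → t.IsPhylo (k+1) →
    decode t.olaEntry k = t
  | 0, t, _, ht => by rw [isPhylo_one ht]; rfl
  | k+1, t, hc, ht => by
      rcases hres : restrictLe t k with _ | t'
      · exact absurd hres (restrictLe_ne_none ht (by omega) k)
      have ht' : t'.IsPhylo (k+1) := isPhylo_restrict ht (by omega) hres
      have hc' : Canon t' := canon_restrictLe t k t' hc hres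
      have IH := decode_encode k t' hc' ht'
      have hagree : ∀ j, 1 ≤ j → j ≤ k → t.olaEntry j = t'.olaEntry j :=
        fun j _ hj => (olaEntry_restrict hres hj).symm
      show insertAt (t.olaEntry (k+1)) (k+1) (decode t.olaEntry k) = t
      rw [decode_congr _ _ k hagree, IH]
      obtain ⟨si, hsib, hins⟩ := sibling_insert t (k+1) (by omega) hc ht.1
        (fun x hx => by have := (mem_leafList_iff ht).mp hx; omega)
        ((mem_leafList_iff ht).mpr (by omega)) t'
        (by rw [Nat.add_sub_cancel]; exact hres)
      have hola : t.olaEntry (k+1) = si := by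
        rw [olaEntry, restrictLe_all t (k+1)
          (fun x hx => by have := (mem_leafList_iff ht).mp hx; omega)]
        show (t.siblingIdx (k+1)).getD 0 = si
        rw [hsib]
        rfl
      rw [hola, hins]

/-! ### Bounds for OLA entries -/

lemma siblingIdx_struct : ∀ (t : BTree) (m : ℕ) (si : ℤ), t.leafList.Nodup →
    siblingIdx t m = some si →
    ∃ s : BTree, si = idx s ∧ m ∉ s.leafList ∧ ∀ x ∈ s.leafList, x ∈ t.leafList
  | .leaf _, m, si, _, h => by simp [siblingIdx] at h
  | .node l r, m, si, hnd, h => by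
      simp only [leafList, List.nodup_append'] at hnd
      obtain ⟨hndl, hndr, hdisj⟩ := hnd
      rw [siblingIdx] at h
      split at h <;> rename_i h1
      · cases h
        refine ⟨r, rfl, fun hx => hdisj (by simp [h1, leafList]) hx,
          fun x hx => by simp only [leafList, List.mem_append]; exact Or.inr hx⟩
      · split at h <;> rename_i h2
        · cases h
          refine ⟨l, rfl, fun hx => hdisj hx (by simp [h2, leafList]),
            fun x hx => by simp only [leafList, List.mem_append]; exact Or.inl hx⟩
        · cases hl : siblingIdx l m with
          | none =>
              rw [hl] at h
              have h3 : siblingIdx r m = some si := h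
              obtain ⟨s, h4, h5, h6⟩ := siblingIdx_struct r m si hndr h3
              exact ⟨s, h4, h5, fun x hx => by
                simp only [leafList, List.mem_append]; exact Or.inr (h6 x hx)⟩
          | some sl =>
              rw [hl] at h
              have h3 : some sl = some si := h
              cases h3
              obtain ⟨s, h4, h5, h6⟩ := siblingIdx_struct l m si hndl hl
              exact ⟨s, h4, h5, fun x hx => by
                simp only [leafList, List.mem_append]; exact Or.inl (h6 x hx)⟩

lemma olaEntry_bound {t : BTree} {n : ℕ} (ht : t.IsPhylo n) (hc : Canon t) {j : ℕ}
    (h1 : 1 ≤ j) (h2 : j ≤ n - 1) : -(j : ℤ) < t.olaEntry j ∧ t.olaEntry j < j := by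
  have hn2 : 2 ≤ n := by omega
  rcases hres : restrictLe t j with _ | u
  · exact absurd hres (restrictLe_ne_none ht (by omega) j)
  have hu : u.IsPhylo (j+1) := isPhylo_restrict ht (by omega) hres
  have hcu : Canon u := canon_restrictLe t j u hc hres
  rcases hres2 : restrictLe u (j-1) with _ | u2
  · exact absurd hres2 (restrictLe_ne_none hu (by omega) (j-1))
  obtain ⟨si, hsib, -⟩ := sibling_insert u j h1 hcu hu.1
    (fun x hx => by have := (mem_leafList_iff hu).mp hx; omega)
    ((mem_leafList_iff hu).mpr (by omega)) u2 hres2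
  have hola : t.olaEntry j = si := by
    rw [olaEntry, hres]
    show (u.siblingIdx j).getD 0 = si
    rw [hsib]
    rfl
  obtain ⟨s, hs1, hs2, hs3⟩ := siblingIdx_struct u j si hu.1 hsib
  rw [hola, hs1]
  have hsub : ∀ x ∈ s.leafList, x < j + 1 := fun x hx => (mem_leafList_iff hu).mp (hs3 x hx)
  cases s with
  | leaf x =>
      have hx : x < j + 1 := hsub x (by simp [leafList])
      have hxj : x ≠ j := fun he => hs2 (by simp [leafList, he])
      simp only [idx]
      constructor <;> [omega; skip]
      omega
  | node s1 s2 =>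
      have e1 : s1.minLeaf < j + 1 := hsub _
        (by simp only [leafList, List.mem_append]; exact Or.inl (minLeaf_mem s1))
      have e2 : s2.minLeaf < j + 1 := hsub _
        (by simp only [leafList, List.mem_append]; exact Or.inr (minLeaf_mem s2))
      have ne1 : s1.minLeaf ≠ j := fun he => hs2
        (by simp only [leafList, List.mem_append]; exact Or.inl (he ▸ minLeaf_mem s1))
      have ne2 : s2.minLeaf ≠ j := fun he => hs2
        (by simp only [leafList, List.mem_append]; exact Or.inr (he ▸ minLeaf_mem s2))
      have hmax : max s1.minLeaf s2.minLeaf < j := by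
        rcases max_cases s1.minLeaf s2.minLeaf with ⟨h, _⟩ | ⟨h, _⟩ <;> omega
      simp only [idx, ← Nat.cast_max]
      omega

/-! ### normalize lemmas -/

lemma leafList_normalize : ∀ t : BTree, (normalize t).leafList.Perm t.leafList
  | .leaf _ => List.Perm.refl _
  | .node l r => by
      by_cases h : minLeaf l ≤ minLeaf r
      · simp only [normalize, if_pos h, leafList]
        exact (leafList_normalize l).append (leafList_normalize r)
      · simp only [normalize, if_neg h, leafList]
        exact ((leafList_normalize r).append (leafList_normalize l)).trans
          List.perm_append_comm

lemma minLeaf_normalize : ∀ t : BTree, (normalize t).minLeaf = t.minLeaf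
  | .leaf _ => rfl
  | .node l r => by
      by_cases h : minLeaf l ≤ minLeaf r
      · simp only [normalize, if_pos h, minLeaf, minLeaf_normalize l, minLeaf_normalize r]
      · simp only [normalize, if_neg h, minLeaf, minLeaf_normalize l, minLeaf_normalize r]
        exact min_comm _ _

lemma idx_normalize : ∀ t : BTree, (normalize t).idx = t.idx
  | .leaf _ => rfl
  | .node l r => by
      by_cases h : minLeaf l ≤ minLeaf r
      · simp only [normalize, if_pos h, idx, minLeaf_normalize l, minLeaf_normalize r]
      · simp only [normalize, if_neg h, idx, minLeaf_normalize l, minLeaf_normalize r]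
        rw [max_comm]

lemma isPhylo_normalize {t : BTree} {n : ℕ} (ht : t.IsPhylo n) : (normalize t).IsPhylo n :=
  ⟨(leafList_normalize t).nodup_iff.mpr ht.1, by
    rw [leafSet, List.toFinset_eq_of_perm _ _ (leafList_normalize t)]; exact ht.2⟩

lemma canon_normalize : ∀ t : BTree, t.leafList.Nodup → Canon (normalize t)
  | .leaf _, _ => trivial
  | .node l r, hnd => by
      simp only [leafList, List.nodup_append'] at hnd
      obtain ⟨hndl, hndr, hdisj⟩ := hnd
      have hne : minLeaf l ≠ minLeaf r :=
        fun he => hdisj (minLeaf_mem l) (he ▸ minLeaf_mem r)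
      by_cases h : minLeaf l ≤ minLeaf r
      · simp only [normalize, if_pos h]
        exact ⟨by rw [minLeaf_normalize, minLeaf_normalize]; omega,
          canon_normalize l hndl, canon_normalize r hndr⟩
      · simp only [normalize, if_neg h]
        exact ⟨by rw [minLeaf_normalize, minLeaf_normalize]; omega,
          canon_normalize r hndr, canon_normalize l hndl⟩

lemma normalize_eq_leaf_iff : ∀ (t : BTree) (y : ℕ), normalize t = .leaf y ↔ t = .leaf y
  | .leaf x, y => Iff.rfl
  | .node l r, y => by
      by_cases h : minLeaf l ≤ minLeaf r <;>
        simp only [normalize, if_pos, if_neg, h, if_true, if_false] <;>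
        exact iff_of_false (by simp) (by simp)

lemma clusters_normalize : ∀ t : BTree, (normalize t).clusters = t.clusters
  | .leaf _ => rfl
  | .node l r => by
      by_cases h : minLeaf l ≤ minLeaf r
      · have hset : {y | y ∈ (BTree.node (normalize l) (normalize r)).leafList} =
            {y | y ∈ (BTree.node l r).leafList} := by
          ext y
          simp only [leafList, List.mem_append, Set.mem_setOf_eq,
            (leafList_normalize l).mem_iff, (leafList_normalize r).mem_iff]
        simp only [normalize, if_pos h, clusters, clusters_normalize l,
          clusters_normalize r, hset]
      · have hset : {y | y ∈ (BTree.node (normalize r) (normalize l)).leafList} =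
            {y | y ∈ (BTree.node l r).leafList} := by
          ext y
          simp only [leafList, List.mem_append, Set.mem_setOf_eq,
            (leafList_normalize l).mem_iff, (leafList_normalize r).mem_iff]
          tauto
        simp only [normalize, if_neg h, clusters, clusters_normalize l,
          clusters_normalize r, hset]
        rw [Set.union_comm]

lemma restrictLe_normalize : ∀ (t : BTree) (j : ℕ),
    restrictLe (normalize t) j = Option.map normalize (restrictLe t j)
  | .leaf x, j => by
      by_cases h : x ≤ j <;> simp [normalize, restrictLe, h]
  | .node l r, j => by
      have IHl := restrictLe_normalize l j
      have IHr := restrictLe_normalize r j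
      by_cases h : minLeaf l ≤ minLeaf r
      · simp only [normalize, if_pos h]
        rcases hl : restrictLe l j with _ | l' <;> rcases hr : restrictLe r j with _ | r' <;>
          rw [hl] at IHl <;> rw [hr] at IHr <;>
          simp only [Option.map_none, Option.map_some] at IHl IHr <;>
          simp only [restrictLe, IHl, IHr, hl, hr, Option.map_none, Option.map_some]
        rw [normalize, if_pos]
        rw [minLeaf_restrictLe l j l' hl, minLeaf_restrictLe r j r' hr]
        exact h
      · simp only [normalize, if_neg h]
        rcases hl : restrictLe l j with _ | l' <;> rcases hr : restrictLe r j with _ | r' <;>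
          rw [hl] at IHl <;> rw [hr] at IHr <;>
          simp only [Option.map_none, Option.map_some] at IHl IHr <;>
          simp only [restrictLe, IHl, IHr, hl, hr, Option.map_none, Option.map_some]
        rw [normalize, if_neg]
        rw [minLeaf_restrictLe l j l' hl, minLeaf_restrictLe r j r' hr]
        exact h

lemma orElse_none_right : ∀ x : Option ℤ, (Option.orElse x (fun _ => none)) = x
  | none => rfl
  | some _ => rfl

lemma siblingIdx_normalize : ∀ (t : BTree) (m : ℕ), t.leafList.Nodup →
    siblingIdx (normalize t) m = siblingIdx t m
  | .leaf _, _, _ => rfl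
  | .node l r, m, hnd => by
      simp only [leafList, List.nodup_append'] at hnd
      obtain ⟨hndl, hndr, hdisj⟩ := hnd
      have IHl := siblingIdx_normalize l m hndl
      have IHr := siblingIdx_normalize r m hndr
      by_cases hlf : l = .leaf m
      · have hrf : r ≠ .leaf m := by
          intro he
          exact hdisj (show m ∈ l.leafList by simp [hlf, leafList])
            (by simp [he, leafList])
        rw [siblingIdx, if_pos hlf]
        by_cases h : minLeaf l ≤ minLeaf r
        · rw [normalize, if_pos h, siblingIdx,
            if_pos ((normalize_eq_leaf_iff l m).mpr hlf), idx_normalize]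
        · rw [normalize, if_neg h, siblingIdx,
            if_neg (fun he => hrf ((normalize_eq_leaf_iff r m).mp he)),
            if_pos ((normalize_eq_leaf_iff l m).mpr hlf), idx_normalize]
      · by_cases hrf : r = .leaf m
        · rw [siblingIdx, if_neg hlf, if_pos hrf]
          by_cases h : minLeaf l ≤ minLeaf r
          · rw [normalize, if_pos h, siblingIdx,
              if_neg (fun he => hlf ((normalize_eq_leaf_iff l m).mp he)),
              if_pos ((normalize_eq_leaf_iff r m).mpr hrf), idx_normalize]
          · rw [normalize, if_neg h, siblingIdx,
              if_pos ((normalize_eq_leaf_iff r m).mpr hrf), idx_normalize]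
        · rw [siblingIdx, if_neg hlf, if_neg hrf]
          by_cases h : minLeaf l ≤ minLeaf r
          · rw [normalize, if_pos h, siblingIdx,
              if_neg (fun he => hlf ((normalize_eq_leaf_iff l m).mp he)),
              if_neg (fun he => hrf ((normalize_eq_leaf_iff r m).mp he)), IHl, IHr]
          · rw [normalize, if_neg h, siblingIdx,
              if_neg (fun he => hrf ((normalize_eq_leaf_iff r m).mp he)),
              if_neg (fun he => hlf ((normalize_eq_leaf_iff l m).mp he)), IHl, IHr]
            by_cases hm : m ∈ l.leafList
            · rw [siblingIdx_eq_none r m (fun hx => hdisj hm hx)]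
              rw [orElse_none_right]
              rfl
            · rw [siblingIdx_eq_none l m hm, orElse_none_right]
              rfl

lemma olaEntry_normalize {t : BTree} (hnd : t.leafList.Nodup) (j : ℕ) :
    olaEntry (normalize t) j = olaEntry t j := by
  rw [olaEntry, olaEntry, restrictLe_normalize]
  rcases h : restrictLe t j with _ | u
  · rfl
  · have hnd' : u.leafList.Nodup := by
      rw [restrictLe_leafList t j u h]
      exact hnd.filter _
    simp only [Option.map_some, Option.bind_some]
    rw [siblingIdx_normalize u j hnd']

/-! ### Clusters determine canonical trees -/

lemma clusters_subset : ∀ (t : BTree) (c : Set ℕ), c ∈ clusters t → ∀ y ∈ c, y ∈ t.leafList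
  | .leaf x, c, hc, y, hy => by
      simp only [clusters, Set.mem_singleton_iff] at hc
      subst hc
      simpa [leafList] using hy
  | .node l r, c, hc, y, hy => by
      simp only [clusters, Set.mem_insert_iff, Set.mem_union] at hc
      rcases hc with rfl | hc | hc
      · exact hy
      · simp only [leafList, List.mem_append]
        exact Or.inl (clusters_subset l c hc y hy)
      · simp only [leafList, List.mem_append]
        exact Or.inr (clusters_subset r c hc y hy)

lemma clusters_nonempty : ∀ (t : BTree) (c : Set ℕ), c ∈ clusters t → c.Nonempty
  | .leaf x, c, hc => by
      simp only [clusters, Set.mem_singleton_iff] at hc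
      exact ⟨x, by simp [hc]⟩
  | .node l r, c, hc => by
      simp only [clusters, Set.mem_insert_iff, Set.mem_union] at hc
      rcases hc with rfl | hc | hc
      · exact ⟨(BTree.node l r).minLeaf, minLeaf_mem _⟩
      · exact clusters_nonempty l c hc
      · exact clusters_nonempty r c hc

lemma leafSet_mem_clusters : ∀ t : BTree, {y | y ∈ t.leafList} ∈ clusters t
  | .leaf x => by
      have h : {y | y ∈ (BTree.leaf x).leafList} = {x} := by
        ext y; simp [leafList]
      rw [h]
      exact rfl
  | .node l r => Set.mem_insert _ _

lemma sUnion_clusters : ∀ t : BTree, ⋃₀ (clusters t) = {y | y ∈ t.leafList}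
  | .leaf x => by
      ext y; simp [clusters, leafList]
  | .node l r => by
      simp only [clusters, Set.sUnion_insert, Set.sUnion_union,
        sUnion_clusters l, sUnion_clusters r]
      ext y
      simp only [Set.mem_union, Set.mem_setOf_eq, leafList, List.mem_append]
      tauto

lemma left_min_subset {l r l' r' : BTree}
    (hlt' : l'.minLeaf < r'.minLeaf)
    (hmm : l.minLeaf = l'.minLeaf)
    (hdisj : l.leafList.Disjoint r.leafList)
    (hLS : ∀ y : ℕ, y ∈ (BTree.node l r).leafList ↔ y ∈ (BTree.node l' r').leafList)
    (hC : clusters (BTree.node l r) = clusters (BTree.node l' r')) :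
    ∀ y ∈ l.leafList, y ∈ l'.leafList := by
  have hmem1 : {y | y ∈ l.leafList} ∈ clusters (BTree.node l' r') := by
    rw [← hC]
    simp only [clusters, Set.mem_insert_iff, Set.mem_union]
    exact Or.inr (Or.inl (leafSet_mem_clusters l))
  simp only [clusters, Set.mem_insert_iff, Set.mem_union] at hmem1
  rcases hmem1 with he | hm | hm
  · exfalso
    obtain ⟨z, hz⟩ := List.exists_mem_of_ne_nil _ (leafList_ne_nil r)
    have hz2 : z ∈ {y | y ∈ (BTree.node l' r').leafList} := by
      rw [Set.mem_setOf_eq, ← hLS]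
      simp only [leafList, List.mem_append]
      exact Or.inr hz
    rw [← he, Set.mem_setOf_eq] at hz2
    exact hdisj hz2 hz
  · exact fun y hy => clusters_subset l' _ hm y hy
  · exfalso
    have h1 : l.minLeaf ∈ r'.leafList :=
      clusters_subset r' _ hm _ (minLeaf_mem l)
    have h2 : r'.minLeaf ≤ l.minLeaf := minLeaf_le r' _ h1
    omega

lemma cluster_half {l r l' r' : BTree}
    (hdisj : l.leafList.Disjoint r.leafList)
    (hRR : ∀ y : ℕ, y ∈ r.leafList ↔ y ∈ r'.leafList)
    (hC : clusters (BTree.node l r) = clusters (BTree.node l' r')) :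
    ∀ c ∈ clusters l, c ∈ clusters l' := by
  intro c hcmem
  have h1 : c ∈ clusters (BTree.node l' r') := by
    rw [← hC]
    simp only [clusters, Set.mem_insert_iff, Set.mem_union]
    exact Or.inr (Or.inl hcmem)
  simp only [clusters, Set.mem_insert_iff, Set.mem_union] at h1
  rcases h1 with rfl | h1 | h1
  · exfalso
    obtain ⟨z, hz⟩ := List.exists_mem_of_ne_nil _ (leafList_ne_nil r')
    have hz1 : z ∈ {y | y ∈ (BTree.node l' r').leafList} := by
      simp only [Set.mem_setOf_eq, leafList, List.mem_append]
      exact Or.inr hz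
    have hz2 : z ∈ l.leafList := clusters_subset l _ hcmem z hz1
    exact hdisj hz2 ((hRR z).mpr hz)
  · exact h1
  · exfalso
    obtain ⟨z, hz⟩ := clusters_nonempty l c hcmem
    have hz1 : z ∈ l.leafList := clusters_subset l c hcmem z hz
    have hz2 : z ∈ r'.leafList := clusters_subset r' c h1 z hz
    exact hdisj hz1 ((hRR z).mpr hz2)

theorem clusters_inj : ∀ t t' : BTree, Canon t → Canon t' → t.leafList.Nodup →
    t'.leafList.Nodup → clusters t = clusters t' → t = t'
  | .leaf x, .leaf y, _, _, _, _, hC => by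
      have h1 : ({x} : Set ℕ) ∈ clusters (.leaf y) := by
        rw [← hC]
        exact rfl
      simp only [clusters, Set.mem_singleton_iff] at h1
      rw [Set.singleton_eq_singleton_iff.mp h1]
  | .leaf x, .node l' r', _, hc', _, hnd', hC => by
      exfalso
      have hLS : {y | y ∈ (BTree.leaf x).leafList} =
          {y | y ∈ (BTree.node l' r').leafList} := by
        rw [← sUnion_clusters, ← sUnion_clusters, hC]
      have h1 : l'.minLeaf = x := by
        have hh : l'.minLeaf ∈ {y | y ∈ (BTree.leaf x).leafList} := by
          rw [hLS, Set.mem_setOf_eq]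
          simp only [leafList, List.mem_append]
          exact Or.inl (minLeaf_mem l')
        simpa [leafList] using hh
      have h2 : r'.minLeaf = x := by
        have hh : r'.minLeaf ∈ {y | y ∈ (BTree.leaf x).leafList} := by
          rw [hLS, Set.mem_setOf_eq]
          simp only [leafList, List.mem_append]
          exact Or.inr (minLeaf_mem r')
        simpa [leafList] using hh
      simp only [leafList, List.nodup_append'] at hnd'
      exact hnd'.2.2 (minLeaf_mem l')
        (by rw [show l'.minLeaf = r'.minLeaf by omega]; exact minLeaf_mem r')
  | .node l r, .leaf y, hc, _, hnd, _, hC => by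
      exfalso
      have hLS : {z | z ∈ (BTree.leaf y).leafList} =
          {z | z ∈ (BTree.node l r).leafList} := by
        rw [← sUnion_clusters, ← sUnion_clusters, hC]
      have h1 : l.minLeaf = y := by
        have hh : l.minLeaf ∈ {z | z ∈ (BTree.leaf y).leafList} := by
          rw [hLS, Set.mem_setOf_eq]
          simp only [leafList, List.mem_append]
          exact Or.inl (minLeaf_mem l)
        simpa [leafList] using hh
      have h2 : r.minLeaf = y := by
        have hh : r.minLeaf ∈ {z | z ∈ (BTree.leaf y).leafList} := by
          rw [hLS, Set.mem_setOf_eq]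
          simp only [leafList, List.mem_append]
          exact Or.inr (minLeaf_mem r)
        simpa [leafList] using hh
      simp only [leafList, List.nodup_append'] at hnd
      exact hnd.2.2 (minLeaf_mem l)
        (by rw [show l.minLeaf = r.minLeaf by omega]; exact minLeaf_mem r)
  | .node l r, .node l' r', hc, hc', hnd, hnd', hC => by
      obtain ⟨hlt, hcl, hcr⟩ := hc
      obtain ⟨hlt', hcl', hcr'⟩ := hc'
      have hnd2 := hnd
      simp only [leafList, List.nodup_append'] at hnd2
      obtain ⟨hndl, hndr, hdisj⟩ := hnd2
      have hnd2' := hnd'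
      simp only [leafList, List.nodup_append'] at hnd2'
      obtain ⟨hndl', hndr', hdisj'⟩ := hnd2'
      have hLS : ∀ y : ℕ, y ∈ (BTree.node l r).leafList ↔
          y ∈ (BTree.node l' r').leafList := by
        intro y
        have hh : ⋃₀ (clusters (BTree.node l r)) = ⋃₀ (clusters (BTree.node l' r')) := by
          rw [hC]
        rw [sUnion_clusters, sUnion_clusters] at hh
        exact Set.ext_iff.mp hh y
      have hmm : l.minLeaf = l'.minLeaf := by
        have h1 : l.minLeaf ∈ (BTree.node l' r').leafList := by
          rw [← hLS]
          simp only [leafList, List.mem_append]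
          exact Or.inl (minLeaf_mem l)
        have h2 : l'.minLeaf ∈ (BTree.node l r).leafList := by
          rw [hLS]
          simp only [leafList, List.mem_append]
          exact Or.inl (minLeaf_mem l')
        have h3 := minLeaf_le (BTree.node l r) _ h2
        have h4 := minLeaf_le (BTree.node l' r') _ h1
        simp only [minLeaf] at h3 h4
        omega
      have mainA : ∀ y ∈ l.leafList, y ∈ l'.leafList :=
        left_min_subset hlt' hmm hdisj hLS hC
      have mainB : ∀ y ∈ l'.leafList, y ∈ l.leafList :=
        left_min_subset hlt hmm.symm hdisj' (fun y => (hLS y).symm) hC.symm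
      have hRR : ∀ y : ℕ, y ∈ r.leafList ↔ y ∈ r'.leafList := by
        intro y
        constructor
        · intro hy
          have h1 : y ∈ (BTree.node l' r').leafList := by
            rw [← hLS]
            simp only [leafList, List.mem_append]
            exact Or.inr hy
          simp only [leafList, List.mem_append] at h1
          rcases h1 with h1 | h1
          · exact absurd hy (hdisj (mainB y h1))
          · exact h1
        · intro hy
          have h1 : y ∈ (BTree.node l r).leafList := by
            rw [hLS]
            simp only [leafList, List.mem_append]
            exact Or.inr hy
          simp only [leafList, List.mem_append] at h1
          rcases h1 with h1 | h1
          · exact absurd hy (hdisj' (mainA y h1))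
          · exact h1
      have hCL : clusters l = clusters l' := by
        ext c
        exact ⟨fun hcm => cluster_half hdisj hRR hC c hcm,
          fun hcm => cluster_half hdisj' (fun y => (hRR y).symm) hC.symm c hcm⟩
      have hCR : clusters r = clusters r' := by
        have hC2 : clusters (BTree.node r l) = clusters (BTree.node r' l') := by
          have e1 : clusters (BTree.node r l) = clusters (BTree.node l r) := by
            simp only [clusters]
            rw [Set.union_comm]
            congr 1
            ext y
            simp only [Set.mem_setOf_eq, leafList, List.mem_append]
            tauto
          have e2 : clusters (BTree.node r' l') = clusters (BTree.node l' r') := by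
            simp only [clusters]
            rw [Set.union_comm]
            congr 1
            ext y
            simp only [Set.mem_setOf_eq, leafList, List.mem_append]
            tauto
          rw [e1, e2, hC]
        have hLL : ∀ y : ℕ, y ∈ l.leafList ↔ y ∈ l'.leafList :=
          fun y => ⟨mainA y, mainB y⟩
        ext c
        exact ⟨fun hcm => cluster_half (List.disjoint_symm hdisj) hLL hC2 c hcm,
          fun hcm => cluster_half (List.disjoint_symm hdisj')
            (fun y => (hLL y).symm) hC2.symm c hcm⟩
      rw [clusters_inj l l' hcl hcl' hndl hndl' hCL,
        clusters_inj r r' hcr hcr' hndr hndr' hCR]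

/-! ### Assembly helpers -/

noncomputable def extVec {n : ℕ} (a : Fin (n-1) → ℤ) : ℕ → ℤ :=
  fun j => if h : 1 ≤ j ∧ j ≤ n-1 then a ⟨j-1, by omega⟩ else 0

lemma extVec_bounds {n : ℕ} (a : Fin (n-1) → ℤ)
    (ha : ∀ i : Fin (n-1), -(i : ℤ) ≤ a i ∧ a i ≤ (i : ℤ)) :
    ∀ j, 1 ≤ j → j ≤ n-1 → -(j : ℤ) < extVec a j ∧ extVec a j < j := by
  intro j h1 h2
  have hp : j - 1 < n - 1 := by omega
  rw [extVec, dif_pos ⟨h1, h2⟩]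
  show -(j : ℤ) < a ⟨j-1, hp⟩ ∧ a ⟨j-1, hp⟩ < j
  obtain ⟨hl, hr⟩ := ha ⟨j-1, hp⟩
  have hc : ((⟨j-1, hp⟩ : Fin (n-1)) : ℤ) = ((j-1 : ℕ) : ℤ) := rfl
  rw [hc] at hl hr
  omega

lemma extVec_eq {n : ℕ} (a : Fin (n-1) → ℤ) (i : Fin (n-1)) :
    extVec a ((i : ℕ) + 1) = a i := by
  have h2 : (i : ℕ) + 1 ≤ n - 1 := i.2
  rw [extVec, dif_pos ⟨by omega, h2⟩]
  congr 1

lemma isPhylo_decode' {n : ℕ} (hn : 1 ≤ n) (a : ℕ → ℤ)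
    (hb : ∀ j, 1 ≤ j → j ≤ n-1 → -(j : ℤ) < a j ∧ a j < j) :
    (decode a (n-1)).IsPhylo n := by
  have h := isPhylo_decode a (n-1) hb
  rwa [Nat.sub_add_cancel hn] at h

lemma norm_choose {n : ℕ} {C : Set (Set ℕ)}
    (h : ∃ t : BTree, t.IsPhylo n ∧ t.clusters = C) :
    (normalize h.choose).IsPhylo n ∧ Canon (normalize h.choose) ∧
      (normalize h.choose).clusters = C := by
  obtain ⟨ht, hc⟩ := h.choose_spec
  exact ⟨isPhylo_normalize ht, canon_normalize _ ht.1, (clusters_normalize _).trans hc⟩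

lemma norm_choose_unique {n : ℕ} {C : Set (Set ℕ)}
    (h : ∃ t : BTree, t.IsPhylo n ∧ t.clusters = C)
    (u : BTree) (hu : u.IsPhylo n) (hcu : Canon u) (hc : u.clusters = C) :
    normalize h.choose = u := by
  obtain ⟨h1, h2, h3⟩ := norm_choose h
  exact clusters_inj _ _ h2 hcu h1.1 hu.1 (h3.trans hc.symm)

end BTree

end OLA
open OLA in
/-- The OLA encoding is a bijection between rooted binary
phylogenetic trees on a fixed ordered leaf set of size `n` (up to isomorphism,
identified by their cluster sets) and integer vectors with `-(i-1) ≤ a_i ≤ i-1`. -/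
theorem stmt1 (n : ℕ) (hn : 1 ≤ n) :
    ∃ e : {C : Set (Set ℕ) // ∃ t : BTree, t.IsPhylo n ∧ t.clusters = C} ≃
          {a : Fin (n-1) → ℤ // ∀ i : Fin (n-1), -(i : ℤ) ≤ a i ∧ a i ≤ (i : ℤ)},
      ∀ (t : BTree) (ht : t.IsPhylo n) (i : Fin (n-1)),
        (e ⟨t.clusters, ⟨t, ht, rfl⟩⟩).1 i = t.olaEntry ((i : ℕ) + 1) := by
  have hnn : n - 1 + 1 = n := by omega
  refine ⟨⟨fun C => ⟨fun i => (BTree.normalize C.2.choose).olaEntry ((i : ℕ) + 1), ?_⟩,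
    fun a => ⟨(BTree.decode (BTree.extVec a.1) (n-1)).clusters,
      ⟨BTree.decode (BTree.extVec a.1) (n-1),
        BTree.isPhylo_decode' hn _ (BTree.extVec_bounds a.1 a.2), rfl⟩⟩, ?_, ?_⟩, ?_⟩
  · -- bounds
    intro i
    obtain ⟨h1, h2, -⟩ := BTree.norm_choose C.2
    have hb := BTree.olaEntry_bound h1 h2 (j := (i : ℕ) + 1) (by omega)
      (by have := i.2; omega)
    push_cast at hb ⊢
    omega
  · -- left inverse
    intro C
    apply Subtype.ext
    show (BTree.decode _ (n-1)).clusters = C.1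
    obtain ⟨h1, h2, h3⟩ := BTree.norm_choose C.2
    have hagree : ∀ j, 1 ≤ j → j ≤ n - 1 →
        BTree.extVec (n := n)
          (fun i : Fin (n-1) => (BTree.normalize C.2.choose).olaEntry ((i : ℕ) + 1)) j =
          (BTree.normalize C.2.choose).olaEntry j := by
      intro j hj1 hj2
      rw [BTree.extVec, dif_pos ⟨hj1, hj2⟩]
      show (BTree.normalize C.2.choose).olaEntry ((j - 1) + 1) = _
      congr 1
      omega
    rw [BTree.decode_congr _ _ (n-1) hagree,
      BTree.decode_encode (n-1) _ h2 (by rw [hnn]; exact h1), h3]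
  · -- right inverse
    intro a
    apply Subtype.ext
    funext i
    show (BTree.normalize (Exists.choose _)).olaEntry ((i : ℕ) + 1) = a.1 i
    have hb := BTree.extVec_bounds a.1 a.2
    have hu : (BTree.decode (BTree.extVec a.1) (n-1)).IsPhylo n :=
      BTree.isPhylo_decode' hn _ hb
    have hcu : BTree.Canon (BTree.decode (BTree.extVec a.1) (n-1)) :=
      (BTree.decode_spec _ _ hb).2.1
    rw [BTree.norm_choose_unique _ _ hu hcu rfl,
      BTree.olaEntry_decode _ _ _ hb (by omega) (by have := i.2; omega),
      BTree.extVec_eq]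
  · -- the encoding property
    intro t ht i
    show (BTree.normalize (Exists.choose _)).olaEntry ((i : ℕ) + 1) = _
    rw [BTree.norm_choose_unique _ (BTree.normalize t) (BTree.isPhylo_normalize ht)
      (BTree.canon_normalize _ ht.1) (BTree.clusters_normalize t),
      BTree.olaEntry_normalize ht.1]
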